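/- Let r ≥ 0 be an integer and write r = 6r₀ + r₁ with r₀ ≥ 0 and 0 ≤ r₁ ≤ 5. Then in ℤ[[u]] one has ((1-u)(1-u²))^{r₀}·P_r(1,u) = u^{3r₀}·P_{r₁}(1,u). Consequently, the numerical multiplicity p_{s,r}(1) (the multiplicity [D(2,sω) : D(3,rω)] of the level-three Demazure module D(3,rω) in a level-three Demazure flag of the level-two Demazure module D(2,sω) for the current algebra of sl₂) is the appropriate coefficient of the rational power series u^{3r₀}·P_{r₁}(1,u)/((1-u)^{r₀}(1-u²)^{r₀}). -/

import Mathlib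

open scoped PowerSeries

/-- The polynomials `p_{s,r}(q) ∈ ℤ[q]` (the graded multiplicities
`[D(2,sω) : D(3,rω)]_q`): `p_{0,0} = p_{1,1} = p_{2,2} = 1`; `p_{s,r} = 0` whenever
`r > s`, or `s - r` is odd, or `s ≤ 2` and `(s,r) ∉ {(0,0),(1,1),(2,2)}`; and for
`s ≥ 3` with `r ≤ s` and `s - r` even, writing `s = 2s₁ + s₀` with `s₀ ∈ {0,1}`,
`p_{s,r} = q^{(s-r)/2} p_{s-3,r-3} + q^{(s₁+s₀-1)(2-s₀)} p_{s-4+2s₀,r}` if `r ≥ 3`, and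
`p_{s,r} = q^{(s₁+s₀-1)(2-s₀)} p_{s-4+2s₀,r}` if `0 ≤ r ≤ 2`. -/
noncomputable def pp : ℕ → ℕ → Polynomial ℤ
  | 0, r => if r = 0 then 1 else 0
  | 1, r => if r = 1 then 1 else 0
  | 2, r => if r = 2 then 1 else 0
  | (s + 3), r =>
    if (s + 3) < r ∨ (s + 3) % 2 ≠ r % 2 then 0
    else
      (if 3 ≤ r then Polynomial.X ^ (((s + 3) - r) / 2) * pp s (r - 3) else 0)
        + Polynomial.X ^ (((s + 3) / 2 + (s + 3) % 2 - 1) * (2 - (s + 3) % 2))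
            * pp ((s + 3) + 2 * ((s + 3) % 2) - 4) r
  termination_by s _ => s
  decreasing_by
  · omega
  · omega

/-- The generating series `P_m(q,u)`: for `m` even, `P_m(q,u) = Σ_{s≥0} p_{2s,m} u^s`;
for `m` odd, `P_m(q,u) = Σ_{s≥0} p_{2s+1,m} u^{s+1}`.  A formal power series in `u` with
coefficients in `ℤ[q]`. -/
noncomputable def Pser (m : ℕ) : PowerSeries (Polynomial ℤ) :=
  PowerSeries.mk fun n =>
    if m % 2 = 0 then pp (2 * n) m else if n = 0 then 0 else pp (2 * n - 1) m

/-- `thetaSubst a c` is the substituted partial theta series `Θ(a, c·u²) ∈ ℤ[q]⟦u⟧`,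
i.e. `Σ_{s≥0} a^{s²} c^s u^{2s}`, where `Θ(q,u) = Σ_{s≥0} q^{s²}u^s`. -/
noncomputable def thetaSubst (a c : Polynomial ℤ) : PowerSeries (Polynomial ℤ) :=
  PowerSeries.mk fun n => if n % 2 = 0 then a ^ ((n / 2) ^ 2) * c ^ (n / 2) else 0

/-- `P_m(1,u) ∈ ℤ⟦u⟧`, obtained from `P_m(q,u)` by evaluating each coefficient at
`q = 1`. -/
noncomputable def Pone (m : ℕ) : PowerSeries ℤ :=
  PowerSeries.map (Polynomial.evalRingHom (1 : ℤ)) (Pser m)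

lemma pp_eq_zero_of_lt : ∀ s r : ℕ, s < r → pp s r = 0
  | 0, r, h => by rw [pp, if_neg (by omega)]
  | 1, r, h => by rw [pp, if_neg (by omega)]
  | 2, r, h => by rw [pp, if_neg (by omega)]
  | s + 3, r, h => by rw [pp, if_pos (Or.inl h)]

lemma pp_step (s r : ℕ) (h3 : 3 ≤ s) (hr : 3 ≤ r) (hsr : r ≤ s) (hp : s % 2 = r % 2) :
    (pp s r).eval 1 = (pp (s - 3) (r - 3)).eval 1 + (pp (s + 2 * (s % 2) - 4) r).eval 1 := by
  obtain ⟨t, rfl⟩ : ∃ t, s = t + 3 := ⟨s - 3, by omega⟩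
  rw [pp, if_neg (by omega), if_pos hr]
  simp

lemma coeff_Pone_even (m n : ℕ) (hm : m % 2 = 0) :
    PowerSeries.coeff n (Pone m) = (pp (2 * n) m).eval 1 := by
  simp [Pone, Pser, hm]

lemma coeff_Pone_odd (m n : ℕ) (hm : m % 2 = 1) :
    PowerSeries.coeff (n + 1) (Pone m) = (pp (2 * n + 1) m).eval 1 := by
  have : 2 * (n + 1) - 1 = 2 * n + 1 := by omega
  simp [Pone, Pser, hm, this]

lemma coeff_Pone_odd_zero (m : ℕ) (hm : m % 2 = 1) :
    PowerSeries.coeff 0 (Pone m) = 0 := by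
  simp [Pone, Pser, hm]

lemma even_rec (r : ℕ) (h2 : r % 2 = 0) (h4 : 4 ≤ r) :
    (1 - PowerSeries.X ^ 2) * Pone r = PowerSeries.X ^ 1 * Pone (r - 3) := by
  have hodd : (r - 3) % 2 = 1 := by omega
  ext n
  rw [sub_mul, one_mul, map_sub, mul_comm (PowerSeries.X ^ 2),
    mul_comm (PowerSeries.X ^ 1), PowerSeries.coeff_mul_X_pow',
    PowerSeries.coeff_mul_X_pow']
  match n with
  | 0 =>
    rw [if_neg (by omega), if_neg (by omega), coeff_Pone_even r 0 h2, pp, if_neg (by omega)]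
    simp
  | 1 =>
    rw [if_neg (by omega), if_pos (by omega), coeff_Pone_even r 1 h2,
      coeff_Pone_odd_zero _ hodd, pp, if_neg (by omega)]
    simp
  | (k + 2) =>
    rw [if_pos (by omega), if_pos (by omega)]
    have e1 : k + 2 - 2 = k := by omega
    have e2 : k + 2 - 1 = k + 1 := by omega
    rw [e1, e2, coeff_Pone_even r (k + 2) h2, coeff_Pone_even r k h2,
      coeff_Pone_odd (r - 3) k hodd]
    by_cases hlt : 2 * (k + 2) < r
    · rw [pp_eq_zero_of_lt _ _ hlt, pp_eq_zero_of_lt _ _ (by omega),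
        pp_eq_zero_of_lt _ _ (by omega)]
      simp
    · have := pp_step (2 * (k + 2)) r (by omega) (by omega) (by omega) (by omega)
      have e3 : 2 * (k + 2) - 3 = 2 * k + 1 := by omega
      have e4 : 2 * (k + 2) + 2 * (2 * (k + 2) % 2) - 4 = 2 * k := by omega
      rw [e3, e4] at this
      rw [this]; ring

lemma odd_rec (r : ℕ) (h2 : r % 2 = 1) (h3 : 3 ≤ r) :
    (1 - PowerSeries.X ^ 1) * Pone r = PowerSeries.X ^ 2 * Pone (r - 3) := by
  have heven : (r - 3) % 2 = 0 := by omega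
  ext n
  rw [sub_mul, one_mul, map_sub, mul_comm (PowerSeries.X ^ 1),
    mul_comm (PowerSeries.X ^ 2), PowerSeries.coeff_mul_X_pow',
    PowerSeries.coeff_mul_X_pow']
  match n with
  | 0 =>
    rw [if_neg (by omega), if_neg (by omega), coeff_Pone_odd_zero r h2]
    simp
  | 1 =>
    rw [if_pos (by omega), if_neg (by omega), coeff_Pone_odd r 0 h2,
      coeff_Pone_odd_zero r h2, pp, if_neg (by omega)]
    simp
  | (k + 2) =>
    rw [if_pos (by omega), if_pos (by omega)]
    have e1 : k + 2 - 1 = k + 1 := by omega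
    have e2 : k + 2 - 2 = k := by omega
    rw [e1, e2, coeff_Pone_odd r (k + 1) h2, coeff_Pone_odd r k h2,
      coeff_Pone_even (r - 3) k heven]
    by_cases hlt : 2 * (k + 1) + 1 < r
    · rw [pp_eq_zero_of_lt _ _ hlt, pp_eq_zero_of_lt _ _ (by omega),
        pp_eq_zero_of_lt _ _ (by omega)]
      simp
    · have := pp_step (2 * (k + 1) + 1) r (by omega) (by omega) (by omega) (by omega)
      have e3 : 2 * (k + 1) + 1 - 3 = 2 * k := by omega
      have e4 : 2 * (k + 1) + 1 + 2 * ((2 * (k + 1) + 1) % 2) - 4 = 2 * k + 1 := by omega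
      rw [e3, e4] at this
      rw [this]; ring

lemma step6 (r : ℕ) (h6 : 6 ≤ r) :
    (1 - PowerSeries.X) * (1 - PowerSeries.X ^ 2) * Pone r
      = PowerSeries.X ^ 3 * Pone (r - 6) := by
  rcases Nat.even_or_odd r with he | ho
  · have h2 : r % 2 = 0 := Nat.even_iff.mp he
    have h1 : (1 - PowerSeries.X ^ 2) * Pone r = PowerSeries.X ^ 1 * Pone (r - 3) :=
      even_rec r h2 (by omega)
    have h2' : (1 - PowerSeries.X ^ 1) * Pone (r - 3) = PowerSeries.X ^ 2 * Pone (r - 3 - 3) :=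
      odd_rec (r - 3) (by omega) (by omega)
    have e : r - 3 - 3 = r - 6 := by omega
    rw [e] at h2'
    calc (1 - PowerSeries.X) * (1 - PowerSeries.X ^ 2) * Pone r
        = (1 - PowerSeries.X ^ 1) * ((1 - PowerSeries.X ^ 2) * Pone r) := by ring
      _ = (1 - PowerSeries.X ^ 1) * (PowerSeries.X ^ 1 * Pone (r - 3)) := by rw [h1]
      _ = PowerSeries.X ^ 1 * ((1 - PowerSeries.X ^ 1) * Pone (r - 3)) := by ring
      _ = PowerSeries.X ^ 1 * (PowerSeries.X ^ 2 * Pone (r - 6)) := by rw [h2']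
      _ = PowerSeries.X ^ 3 * Pone (r - 6) := by ring
  · have h2 : r % 2 = 1 := Nat.odd_iff.mp ho
    have h1 : (1 - PowerSeries.X ^ 1) * Pone r = PowerSeries.X ^ 2 * Pone (r - 3) :=
      odd_rec r h2 (by omega)
    have h2' : (1 - PowerSeries.X ^ 2) * Pone (r - 3) = PowerSeries.X ^ 1 * Pone (r - 3 - 3) :=
      even_rec (r - 3) (by omega) (by omega)
    have e : r - 3 - 3 = r - 6 := by omega
    rw [e] at h2'
    calc (1 - PowerSeries.X) * (1 - PowerSeries.X ^ 2) * Pone r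
        = (1 - PowerSeries.X ^ 2) * ((1 - PowerSeries.X ^ 1) * Pone r) := by ring
      _ = (1 - PowerSeries.X ^ 2) * (PowerSeries.X ^ 2 * Pone (r - 3)) := by rw [h1]
      _ = PowerSeries.X ^ 2 * ((1 - PowerSeries.X ^ 2) * Pone (r - 3)) := by ring
      _ = PowerSeries.X ^ 2 * (PowerSeries.X ^ 1 * Pone (r - 6)) := by rw [h2']
      _ = PowerSeries.X ^ 3 * Pone (r - 6) := by ring

/-- Let `r ≥ 0` and write `r = 6r₀ + r₁` with `r₀ ≥ 0`, `0 ≤ r₁ ≤ 5`.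
Then in `ℤ⟦u⟧`: `((1-u)(1-u²))^{r₀}·P_r(1,u) = u^{3r₀}·P_{r₁}(1,u)`.  Consequently the
numerical multiplicity `p_{s,r}(1) = [D(2,sω) : D(3,rω)]` is the appropriate
coefficient of the rational power series
`u^{3r₀}·P_{r₁}(1,u)/((1-u)^{r₀}(1-u²)^{r₀})`. -/
theorem stmt19 (r r₀ r₁ : ℕ) (h : r = 6 * r₀ + r₁) (h₁ : r₁ ≤ 5) :
    ((1 - PowerSeries.X) * (1 - PowerSeries.X ^ 2)) ^ r₀ * Pone r
      = PowerSeries.X ^ (3 * r₀) * Pone r₁ := by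
  subst h
  induction r₀ with
  | zero => simp
  | succ k ih =>
    have hs := step6 (6 * (k + 1) + r₁) (by omega)
    have e : 6 * (k + 1) + r₁ - 6 = 6 * k + r₁ := by omega
    rw [e] at hs
    calc ((1 - PowerSeries.X) * (1 - PowerSeries.X ^ 2)) ^ (k + 1) * Pone (6 * (k + 1) + r₁)
        = ((1 - PowerSeries.X) * (1 - PowerSeries.X ^ 2)) ^ k
            * ((1 - PowerSeries.X) * (1 - PowerSeries.X ^ 2) * Pone (6 * (k + 1) + r₁)) := by
          rw [pow_succ]; ring
      _ = ((1 - PowerSeries.X) * (1 - PowerSeries.X ^ 2)) ^ k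
            * (PowerSeries.X ^ 3 * Pone (6 * k + r₁)) := by rw [hs]
      _ = PowerSeries.X ^ 3
            * (((1 - PowerSeries.X) * (1 - PowerSeries.X ^ 2)) ^ k * Pone (6 * k + r₁)) := by
          ring
      _ = PowerSeries.X ^ 3 * (PowerSeries.X ^ (3 * k) * Pone r₁) := by rw [ih]
      _ = PowerSeries.X ^ (3 * (k + 1)) * Pone r₁ := by
          rw [← mul_assoc, ← pow_add]
          congr 2
          omega
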